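/- In a right-angled Artin group A_Γ with standard generating set S = V(Γ)^±, for every element g and generator t ∈ S: |t⁻¹gt| + |tgt⁻¹| ≥ 2|g|. -/

import Mathlib

open Filter Topology

section WL
variable {G : Type*} [Group G]

/-- Word length of `g` with respect to a generating set `S`. -/
noncomputable def wl (S : Set G) (g : G) : ℕ :=
  sInf {n | ∃ l : List G, (∀ x ∈ l, x ∈ S) ∧ l.length = n ∧ l.prod = g}

/-- Average word length of conjugates of `g` by elements of `S`. -/
noncomputable def Av (S : Finset G) (g : G) : ℝ :=
  (∑ a ∈ S, (wl (S : Set G) (a⁻¹ * g * a) : ℝ)) / S.card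

/-- Medium-scale Ricci curvature `κ(g) = (|g| - Av(g))/|g|`. -/
noncomputable def curv (S : Finset G) (g : G) : ℝ :=
  ((wl (S : Set G) g : ℝ) - Av S g) / (wl (S : Set G) g)

end WL


open scoped commutatorElement

/-- Commutator relators of a right-angled Artin group on the graph `Γ`. -/
def raagRels {V : Type*} (Γ : SimpleGraph V) : Set (FreeGroup V) :=
  {w | ∃ u v : V, Γ.Adj u v ∧ w = ⁅FreeGroup.of u, FreeGroup.of v⁆}

/-- The right-angled Artin group on the graph `Γ`. -/
abbrev RAAG {V : Type*} (Γ : SimpleGraph V) : Type _ :=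
  PresentedGroup (raagRels Γ)

/-- The standard symmetric generating set `V(Γ)^±` of the RAAG. -/
noncomputable def raagS {V : Type*} [Fintype V] (Γ : SimpleGraph V) :
    Finset (RAAG Γ) := by
  classical
  exact Finset.univ.image (fun v : V => (PresentedGroup.of v : RAAG Γ)) ∪
    Finset.univ.image (fun v : V => (PresentedGroup.of v : RAAG Γ)⁻¹)

namespace RaagProof

variable {V : Type*} (Γ : SimpleGraph V)

/-- Signed letters. -/
abbrev L (V : Type*) := V × Bool

def linv (x : L V) : L V := (x.1, !x.2)

@[simp] lemma linv_linv (x : L V) : linv (linv x) = x := by simp [linv]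
@[simp] lemma linv_fst (x : L V) : (linv x).1 = x.1 := rfl
lemma linv_ne (x : L V) : linv x ≠ x := by
  simp [linv, Prod.ext_iff]

noncomputable def toG (x : L V) : RAAG Γ :=
  if x.2 then PresentedGroup.of x.1 else (PresentedGroup.of x.1)⁻¹

noncomputable def pw (w : List (L V)) : RAAG Γ := (w.map (toG Γ)).prod

@[simp] lemma pw_nil : pw Γ ([] : List (L V)) = 1 := rfl
@[simp] lemma pw_cons (x : L V) (w : List (L V)) : pw Γ (x :: w) = toG Γ x * pw Γ w := by
  simp [pw]
@[simp] lemma pw_append (w w' : List (L V)) : pw Γ (w ++ w') = pw Γ w * pw Γ w' := by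
  simp [pw]

lemma of_commute {u v : V} (h : Γ.Adj u v) :
    Commute (PresentedGroup.of (rels := raagRels Γ) u) (PresentedGroup.of v) := by
  rw [← commutatorElement_eq_one_iff_commute]
  have : (PresentedGroup.mk (raagRels Γ)) ⁅FreeGroup.of u, FreeGroup.of v⁆ = 1 := by
    refine (QuotientGroup.eq_one_iff _).mpr ?_
    exact Subgroup.subset_normalClosure ⟨u, v, h, rfl⟩
  rw [map_commutatorElement] at this
  exact this

lemma toG_comm {y x : L V} (h : Γ.Adj y.1 x.1) : Commute (toG Γ y) (toG Γ x) := by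
  have base := of_commute Γ h
  unfold toG
  cases y.2 <;> cases x.2 <;> simp <;>
    first
      | exact base
      | exact base.inv_left
      | exact base.inv_right
      | exact base.inv_left.inv_right

@[simp] lemma toG_linv (x : L V) : toG Γ (linv x) = (toG Γ x)⁻¹ := by
  unfold toG linv
  cases x.2 <;> simp

/-- `Cancels x w w'` : `w = b ++ [x⁻¹] ++ c` with every letter of `b` adjacent to `x`,
and `w' = b ++ c`. -/
inductive Cancels (x : L V) : List (L V) → List (L V) → Prop
  | head (w) : Cancels x (linv x :: w) w
  | cons {y : L V} {w w' : List (L V)} (h : Γ.Adj y.1 x.1) (hc : Cancels x w w') :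
      Cancels x (y :: w) (y :: w')

inductive Reducible : List (L V) → Prop
  | head {x : L V} {w w' : List (L V)} (h : Cancels Γ x w w') : Reducible (x :: w)
  | cons {y : L V} {w : List (L V)} (h : Reducible w) : Reducible (y :: w)

variable {Γ}

lemma cancels_nil {x : L V} {t : List (L V)} (h : Cancels Γ x [] t) : False := by
  cases h

lemma not_reducible_nil : ¬ Reducible Γ ([] : List (L V)) := fun h => by cases h

lemma cancels_unique {x : L V} {w w₁ w₂ : List (L V)}
    (h1 : Cancels Γ x w w₁) (h2 : Cancels Γ x w w₂) : w₁ = w₂ := by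
  induction h1 generalizing w₂ with
  | head w =>
      cases h2 with
      | head => rfl
      | cons h hc => exact absurd h (by simp [Γ.irrefl])
  | cons h hc ih =>
      cases h2 with
      | head => exact absurd h (by simp [Γ.irrefl])
      | cons h' hc' => rw [ih hc']

lemma cancels_length {x : L V} {w w' : List (L V)} (h : Cancels Γ x w w') :
    w.length = w'.length + 1 := by
  induction h with
  | head w => simp
  | cons h hc ih => simp [ih]

lemma cancels_pw {x : L V} {w w' : List (L V)} (h : Cancels Γ x w w') :
    pw Γ w = (toG Γ x)⁻¹ * pw Γ w' := by
  induction h with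
  | head w => simp
  | cons h hc ih =>
      have := (toG_comm (Γ := Γ) (y := _) (x := _) h).inv_right
      simp only [pw_cons, ih, ← mul_assoc, this.eq]

lemma reducible_shorter {w : List (L V)} (h : Reducible Γ w) :
    ∃ w', pw Γ w' = pw Γ w ∧ w'.length + 2 = w.length := by
  induction h with
  | head h =>
      rename_i x w w'
      refine ⟨w', ?_, by simp [cancels_length h]⟩
      rw [pw_cons, cancels_pw h, ← mul_assoc, mul_inv_cancel, one_mul]
  | @cons y w h ih =>
      obtain ⟨w', h1, h2⟩ := ih
      exact ⟨y :: w', by simp [h1], by simp [← h2]⟩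


lemma cancels_cons_inv {x z : L V} {w t : List (L V)} (h : Cancels Γ x (z :: w) t) :
    (z = linv x ∧ t = w) ∨ (Γ.Adj z.1 x.1 ∧ ∃ t₀, Cancels Γ x w t₀ ∧ t = z :: t₀) := by
  cases h with
  | head => exact Or.inl ⟨rfl, rfl⟩
  | cons h hc => exact Or.inr ⟨h, _, hc, rfl⟩

/-- If `x` cancels in `w` giving `w'`, and `y` (adjacent to `x`) cancels in `w'`,
then `y` cancels in `w`. -/
lemma cancels_of_cancels_cancels {x y : L V} {w w' t : List (L V)}
    (hxy : Γ.Adj x.1 y.1) (h1 : Cancels Γ x w w') (h2 : Cancels Γ y w' t) :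
    ∃ t₂, Cancels Γ y w t₂ := by
  induction h1 generalizing t with
  | head w => exact ⟨linv x :: t, Cancels.cons (by simpa using hxy) h2⟩
  | @cons z w₀ w₀' hz hc ih =>
      rcases cancels_cons_inv h2 with ⟨rfl, rfl⟩ | ⟨hadj, t₀, hc2, rfl⟩
      · exact ⟨w₀, Cancels.head w₀⟩
      · obtain ⟨t₂, ht₂⟩ := ih hc2
        exact ⟨z :: t₂, Cancels.cons hadj ht₂⟩

/-- If `x` cancels in `w` giving `w'`, and `x⁻¹` cancels in `w'`, then `w` is reducible. -/
lemma reducible_of_cancels_cancels_inv {x : L V} {w w' t : List (L V)}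
    (h1 : Cancels Γ x w w') (h2 : Cancels Γ (linv x) w' t) : Reducible Γ w := by
  induction h1 generalizing t with
  | head w => exact Reducible.head h2
  | @cons z w₀ w₀' hz hc ih =>
      rcases cancels_cons_inv h2 with ⟨hz2, rfl⟩ | ⟨hadj, t₀, hc2, rfl⟩
      · exact absurd hz (by rw [hz2]; simp [Γ.irrefl])
      · exact Reducible.cons (ih hc2)

/-- Two letters with different vertices both cancel: they cancel jointly. -/
lemma cancels_both {x y : L V} {w wx wy : List (L V)} (hne : x.1 ≠ y.1)
    (hx : Cancels Γ x w wx) (hy : Cancels Γ y w wy) :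
    ∃ t, Cancels Γ y wx t ∧ Cancels Γ x wy t := by
  induction hx generalizing wy with
  | head w =>
      rcases cancels_cons_inv hy with ⟨heq, rfl⟩ | ⟨hadj, t₀, hcy, rfl⟩
      · exact absurd (congrArg Prod.fst heq) (by simpa [linv] using hne)
      · exact ⟨t₀, hcy, Cancels.head t₀⟩
  | @cons z w₀ wx₀ hz hcx ih =>
      rcases cancels_cons_inv hy with ⟨rfl, rfl⟩ | ⟨hadj, t₀, hcy, rfl⟩
      · exact ⟨wx₀, Cancels.head wx₀, hcx⟩
      · obtain ⟨t, h1, h2⟩ := ih hcy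
        exact ⟨z :: t, Cancels.cons hadj h1, Cancels.cons hz h2⟩

/-- Single swap of adjacent commuting letters. -/
def SStep (Γ : SimpleGraph V) (w w' : List (L V)) : Prop :=
  ∃ (a b : List (L V)) (x y : L V), Γ.Adj x.1 y.1 ∧ w = a ++ x :: y :: b ∧ w' = a ++ y :: x :: b

def Shuf (Γ : SimpleGraph V) : List (L V) → List (L V) → Prop :=
  Relation.ReflTransGen (SStep Γ)

lemma SStep.symm {w w' : List (L V)} (h : SStep Γ w w') : SStep Γ w' w := by
  obtain ⟨a, b, x, y, hadj, rfl, rfl⟩ := h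
  exact ⟨a, b, y, x, hadj.symm, rfl, rfl⟩

lemma Shuf.refl (w : List (L V)) : Shuf Γ w w := Relation.ReflTransGen.refl

lemma Shuf.trans {w₁ w₂ w₃ : List (L V)} (h1 : Shuf Γ w₁ w₂) (h2 : Shuf Γ w₂ w₃) :
    Shuf Γ w₁ w₃ := Relation.ReflTransGen.trans h1 h2

lemma Shuf.symm {w w' : List (L V)} (h : Shuf Γ w w') : Shuf Γ w' w := by
  induction h with
  | refl => exact Shuf.refl _
  | tail h1 h2 ih => exact Relation.ReflTransGen.trans (Relation.ReflTransGen.single h2.symm) ih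

lemma Shuf.of_step {w w' : List (L V)} (h : SStep Γ w w') : Shuf Γ w w' :=
  Relation.ReflTransGen.single h

lemma SStep.cons {w w' : List (L V)} (z : L V) (h : SStep Γ w w') :
    SStep Γ (z :: w) (z :: w') := by
  obtain ⟨a, b, x, y, hadj, rfl, rfl⟩ := h
  exact ⟨z :: a, b, x, y, hadj, rfl, rfl⟩

lemma Shuf.cons {w w' : List (L V)} (z : L V) (h : Shuf Γ w w') :
    Shuf Γ (z :: w) (z :: w') := by
  induction h with
  | refl => exact Shuf.refl _
  | tail h1 h2 ih => exact ih.trans (Shuf.of_step (h2.cons z))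

lemma SStep.length {w w' : List (L V)} (h : SStep Γ w w') : w.length = w'.length := by
  obtain ⟨a, b, x, y, _, rfl, rfl⟩ := h; simp

lemma Shuf.length {w w' : List (L V)} (h : Shuf Γ w w') : w.length = w'.length := by
  induction h with
  | refl => rfl
  | tail h1 h2 ih => rw [ih, h2.length]

lemma Shuf.swap {x y : L V} (h : Γ.Adj x.1 y.1) (w : List (L V)) :
    Shuf Γ (x :: y :: w) (y :: x :: w) :=
  Shuf.of_step ⟨[], w, x, y, h, rfl, rfl⟩

lemma cancels_shuf {x : L V} {w w' : List (L V)} (h : Cancels Γ x w w') :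
    Shuf Γ w (linv x :: w') := by
  induction h with
  | head w => exact Shuf.refl _
  | @cons z w₀ w₀' hz hc ih =>
      exact (ih.cons z).trans (Shuf.swap (by simpa using hz) w₀')

open scoped Classical in
noncomputable def act (Γ : SimpleGraph V) (x : L V) (w : List (L V)) : List (L V) :=
  if h : ∃ w', Cancels Γ x w w' then h.choose else x :: w

lemma act_eq_of_cancels {x : L V} {w w' : List (L V)} (h : Cancels Γ x w w') :
    act Γ x w = w' := by
  rw [act, dif_pos ⟨w', h⟩]
  exact cancels_unique (Exists.choose_spec (⟨w', h⟩ : ∃ w', Cancels Γ x w w')) h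

lemma act_eq_cons {x : L V} {w : List (L V)} (h : ¬ ∃ w', Cancels Γ x w w') :
    act Γ x w = x :: w := by rw [act, dif_neg h]

lemma act_shuf_cons {z x : L V} (hzx : Γ.Adj z.1 x.1) (w : List (L V)) :
    Shuf Γ (act Γ x (z :: w)) (z :: act Γ x w) := by
  by_cases h : ∃ w', Cancels Γ x w w'
  · obtain ⟨w', hw'⟩ := h
    rw [act_eq_of_cancels (Cancels.cons hzx hw'), act_eq_of_cancels hw']
    exact Shuf.refl _
  · have hz : ¬ ∃ w', Cancels Γ x (z :: w) w' := by
      rintro ⟨w', hw'⟩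
      rcases cancels_cons_inv hw' with ⟨rfl, rfl⟩ | ⟨hadj, t₀, hc, rfl⟩
      · exact absurd hzx (by simp [Γ.irrefl])
      · exact h ⟨_, hc⟩
    rw [act_eq_cons hz, act_eq_cons h]
    exact Shuf.swap (by simpa using hzx.symm) w

/-- `act` is compatible with shuffle steps. -/
lemma act_sstep {x : L V} {w w' : List (L V)} (h : SStep Γ w w') :
    Shuf Γ (act Γ x w) (act Γ x w') := by
  obtain ⟨a, b, s, t, hadj, rfl, rfl⟩ := h
  induction a with
  | nil =>
      simp only [List.nil_append]
      by_cases hs : s = linv x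
      · subst hs
        have htx : Γ.Adj t.1 x.1 := by simpa using hadj.symm
        rw [act_eq_of_cancels (Cancels.head (t :: b)),
          act_eq_of_cancels (Cancels.cons htx (Cancels.head b))]
        exact Shuf.refl _
      · by_cases hsx : Γ.Adj s.1 x.1
        · by_cases ht : t = linv x
          · subst ht
            rw [act_eq_of_cancels (Cancels.cons hsx (Cancels.head b)),
              act_eq_of_cancels (Cancels.head (s :: b))]
            exact Shuf.refl _
          · by_cases htx : Γ.Adj t.1 x.1
            · by_cases hb : ∃ b', Cancels Γ x b b'
              · obtain ⟨b', hb'⟩ := hb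
                rw [act_eq_of_cancels (Cancels.cons hsx (Cancels.cons htx hb')),
                  act_eq_of_cancels (Cancels.cons htx (Cancels.cons hsx hb'))]
                exact Shuf.swap hadj b'
              · have h1 : ¬ ∃ w', Cancels Γ x (s :: t :: b) w' := by
                  rintro ⟨w', hw'⟩
                  rcases cancels_cons_inv hw' with ⟨rfl, rfl⟩ | ⟨_, t₀, hc, rfl⟩
                  · exact hs rfl
                  · rcases cancels_cons_inv hc with ⟨rfl, rfl⟩ | ⟨_, t₁, hc1, rfl⟩
                    · exact ht rfl
                    · exact hb ⟨_, hc1⟩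
                have h2 : ¬ ∃ w', Cancels Γ x (t :: s :: b) w' := by
                  rintro ⟨w', hw'⟩
                  rcases cancels_cons_inv hw' with ⟨rfl, rfl⟩ | ⟨_, t₀, hc, rfl⟩
                  · exact ht rfl
                  · rcases cancels_cons_inv hc with ⟨rfl, rfl⟩ | ⟨_, t₁, hc1, rfl⟩
                    · exact hs rfl
                    · exact hb ⟨_, hc1⟩
                rw [act_eq_cons h1, act_eq_cons h2]
                exact Shuf.of_step ⟨[x], b, s, t, hadj, rfl, rfl⟩
            · have h1 : ¬ ∃ w', Cancels Γ x (s :: t :: b) w' := by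
                rintro ⟨w', hw'⟩
                rcases cancels_cons_inv hw' with ⟨rfl, rfl⟩ | ⟨_, t₀, hc, rfl⟩
                · exact hs rfl
                · rcases cancels_cons_inv hc with ⟨rfl, rfl⟩ | ⟨hta, t₁, hc1, rfl⟩
                  · exact ht rfl
                  · exact htx hta
              have h2 : ¬ ∃ w', Cancels Γ x (t :: s :: b) w' := by
                rintro ⟨w', hw'⟩
                rcases cancels_cons_inv hw' with ⟨rfl, rfl⟩ | ⟨hta, t₀, hc, rfl⟩
                · exact ht rfl
                · exact htx hta
              rw [act_eq_cons h1, act_eq_cons h2]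
              exact Shuf.of_step ⟨[x], b, s, t, hadj, rfl, rfl⟩
        · -- s not adjacent to x, s ≠ inv x
          have ht : t ≠ linv x := fun h => hsx (by simpa [h] using hadj)
          have h1 : ¬ ∃ w', Cancels Γ x (s :: t :: b) w' := by
            rintro ⟨w', hw'⟩
            rcases cancels_cons_inv hw' with ⟨rfl, rfl⟩ | ⟨hsa, t₀, hc, rfl⟩
            · exact hs rfl
            · exact hsx hsa
          have h2 : ¬ ∃ w', Cancels Γ x (t :: s :: b) w' := by
            rintro ⟨w', hw'⟩
            rcases cancels_cons_inv hw' with ⟨rfl, rfl⟩ | ⟨hta, t₀, hc, rfl⟩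
            · exact ht rfl
            · rcases cancels_cons_inv hc with ⟨rfl, rfl⟩ | ⟨hsa, t₁, hc1, rfl⟩
              · exact hs rfl
              · exact hsx hsa
          rw [act_eq_cons h1, act_eq_cons h2]
          exact Shuf.of_step ⟨[x], b, s, t, hadj, rfl, rfl⟩
  | cons z a ih =>
      simp only [List.cons_append]
      by_cases hz : z = linv x
      · subst hz
        rw [act_eq_of_cancels (Cancels.head _), act_eq_of_cancels (Cancels.head _)]
        exact Shuf.of_step ⟨a, b, s, t, hadj, rfl, rfl⟩
      · by_cases hza : Γ.Adj z.1 x.1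
        · exact ((act_shuf_cons hza _).trans (ih.cons z)).trans
            (act_shuf_cons hza _).symm
        · have h1 : ¬ ∃ w', Cancels Γ x (z :: (a ++ s :: t :: b)) w' := by
            rintro ⟨w', hw'⟩
            rcases cancels_cons_inv hw' with ⟨rfl, rfl⟩ | ⟨hza', _, _, rfl⟩
            · exact hz rfl
            · exact hza hza'
          have h2 : ¬ ∃ w', Cancels Γ x (z :: (a ++ t :: s :: b)) w' := by
            rintro ⟨w', hw'⟩
            rcases cancels_cons_inv hw' with ⟨rfl, rfl⟩ | ⟨hza', _, _, rfl⟩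
            · exact hz rfl
            · exact hza hza'
          rw [act_eq_cons h1, act_eq_cons h2]
          exact Shuf.of_step ⟨x :: z :: a, b, s, t, hadj, rfl, rfl⟩

lemma act_shuf {x : L V} {w w' : List (L V)} (h : Shuf Γ w w') :
    Shuf Γ (act Γ x w) (act Γ x w') := by
  induction h with
  | refl => exact Shuf.refl _
  | tail h1 h2 ih => exact ih.trans (act_sstep h2)

/-- Cancelling preserves reducedness. -/
lemma reducible_of_cancels {x : L V} {w w' : List (L V)} (h : Cancels Γ x w w')
    (hr : Reducible Γ w') : Reducible Γ w := by
  induction h with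
  | head w => exact Reducible.cons hr
  | @cons z w₀ w₀' hz hc ih =>
      cases hr with
      | head h2 => 
          obtain ⟨t₂, ht₂⟩ := cancels_of_cancels_cancels hz.symm hc h2
          exact Reducible.head ht₂
      | cons h2 => exact Reducible.cons (ih h2)

lemma act_not_reducible {x : L V} {w : List (L V)} (hw : ¬ Reducible Γ w) :
    ¬ Reducible Γ (act Γ x w) := by
  by_cases h : ∃ w', Cancels Γ x w w'
  · obtain ⟨w', hw'⟩ := h
    rw [act_eq_of_cancels hw']
    exact fun hr => hw (reducible_of_cancels hw' hr)
  · rw [act_eq_cons h]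
    intro hr
    cases hr with
    | head h2 => exact h ⟨_, h2⟩
    | cons h2 => exact hw h2

/-- `act (linv x)` undoes `act x` up to shuffle, on reduced words. -/
lemma act_linv_act {x : L V} {w : List (L V)} (hw : ¬ Reducible Γ w) :
    Shuf Γ (act Γ (linv x) (act Γ x w)) w := by
  by_cases h : ∃ w', Cancels Γ x w w'
  · obtain ⟨w', hw'⟩ := h
    rw [act_eq_of_cancels hw']
    have hno : ¬ ∃ t, Cancels Γ (linv x) w' t := by
      rintro ⟨t, ht⟩
      exact hw (reducible_of_cancels_cancels_inv hw' ht)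
    rw [act_eq_cons hno]
    exact (cancels_shuf hw').symm
  · rw [act_eq_cons h]
    have : Cancels Γ (linv x) (x :: w) w := by
      have := Cancels.head (Γ := Γ) (x := linv x) w
      rwa [linv_linv] at this
    rw [act_eq_of_cancels this]
    exact Shuf.refl w

/-- Actions of adjacent letters commute up to shuffle. -/
lemma act_comm {x y : L V} (hxy : Γ.Adj x.1 y.1) (w : List (L V)) :
    Shuf Γ (act Γ x (act Γ y w)) (act Γ y (act Γ x w)) := by
  have key : ∀ (x y : L V), Γ.Adj x.1 y.1 → ∀ (w wx : List (L V)), Cancels Γ x w wx →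
      Shuf Γ (act Γ x (act Γ y w)) (act Γ y (act Γ x w)) := by
    intro x y hxy w wx hcx
    rw [act_eq_of_cancels hcx]
    by_cases hy : ∃ wy, Cancels Γ y w wy
    · obtain ⟨wy, hcy⟩ := hy
      obtain ⟨t, h1, h2⟩ := cancels_both hxy.ne hcx hcy
      rw [act_eq_of_cancels hcy, act_eq_of_cancels h1, act_eq_of_cancels h2]
      exact Shuf.refl _
    · have hny : ¬ ∃ t, Cancels Γ y wx t := by
        rintro ⟨t, ht⟩
        obtain ⟨t₂, ht₂⟩ := cancels_of_cancels_cancels hxy hcx ht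
        exact hy ⟨t₂, ht₂⟩
      rw [act_eq_cons hy, act_eq_cons hny,
        act_eq_of_cancels (Cancels.cons (by simpa using hxy.symm) hcx)]
      exact Shuf.refl _
  by_cases hx : ∃ wx, Cancels Γ x w wx
  · obtain ⟨wx, hcx⟩ := hx
    by_cases hy : ∃ wy, Cancels Γ y w wy
    · obtain ⟨wy, hcy⟩ := hy
      obtain ⟨t, h1, h2⟩ := cancels_both hxy.ne hcx hcy
      rw [act_eq_of_cancels hcx, act_eq_of_cancels hcy,
        act_eq_of_cancels h1, act_eq_of_cancels h2]
      exact Shuf.refl _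
    · exact (key x y hxy w wx hcx)
  · by_cases hy : ∃ wy, Cancels Γ y w wy
    · exact (key y x hxy.symm w _ hy.choose_spec).symm
    · rw [act_eq_cons hy, act_eq_cons hx]
      have hCy : ¬ ∃ t, Cancels Γ x (y :: w) t := by
        rintro ⟨t, ht⟩
        rcases cancels_cons_inv ht with ⟨rfl, rfl⟩ | ⟨_, t₀, hc, rfl⟩
        · exact Γ.irrefl (v := x.1) (by simpa using hxy)
        · exact hx ⟨_, hc⟩
      have hCx : ¬ ∃ t, Cancels Γ y (x :: w) t := by
        rintro ⟨t, ht⟩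
        rcases cancels_cons_inv ht with ⟨heq, rfl⟩ | ⟨_, t₀, hc, rfl⟩
        · exact Γ.irrefl (v := x.1) (by
            have : x.1 = y.1 := by simpa [linv] using congrArg Prod.fst heq
            simpa [this] using hxy)
        · exact hy ⟨_, hc⟩
      rw [act_eq_cons hCy, act_eq_cons hCx]
      exact Shuf.swap (by simpa using hxy) w

variable (Γ) in
def Red := {w : List (L V) // ¬ Reducible Γ w}

variable (Γ) in
instance redSetoid : Setoid (Red Γ) :=
  ⟨fun a b => Shuf Γ a.1 b.1, fun _ => Shuf.refl _, Shuf.symm, Shuf.trans⟩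

variable (Γ) in
def Om := Quotient (redSetoid Γ)

noncomputable def actOm (x : L V) : Om Γ → Om Γ :=
  Quotient.map (fun r => ⟨act Γ x r.1, act_not_reducible r.2⟩) (fun _ _ h => act_shuf h)

lemma actOm_mk (x : L V) (w : List (L V)) (hw : ¬ Reducible Γ w) :
    actOm x (⟦⟨w, hw⟩⟧ : Om Γ) = ⟦⟨act Γ x w, act_not_reducible hw⟩⟧ := rfl

lemma actOm_linv_actOm (x : L V) (ω : Om Γ) : actOm (linv x) (actOm x ω) = ω := by
  induction ω using Quotient.inductionOn with
  | h r =>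
      obtain ⟨w, hw⟩ := r
      rw [actOm_mk, actOm_mk]
      exact Quotient.sound (act_linv_act hw)

variable (Γ) in
noncomputable def eV (v : V) : Equiv.Perm (Om Γ) where
  toFun := actOm (v, true)
  invFun := actOm (v, false)
  left_inv := fun ω => actOm_linv_actOm (v, true) ω
  right_inv := fun ω => actOm_linv_actOm (v, false) ω

lemma eV_apply (v : V) (ω : Om Γ) : eV Γ v ω = actOm (v, true) ω := rfl

variable (Γ) in
noncomputable def rho : RAAG Γ →* Equiv.Perm (Om Γ) :=
  PresentedGroup.toGroup (f := fun v => eV Γ v) (by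
    rintro r ⟨u, v, huv, rfl⟩
    rw [map_commutatorElement, commutatorElement_eq_one_iff_commute]
    simp only [FreeGroup.lift_apply_of]
    ext ω
    simp only [Equiv.Perm.mul_apply]
    induction ω using Quotient.inductionOn with
    | h r =>
        obtain ⟨w, hw⟩ := r
        show (⟦⟨act Γ (u, true) (act Γ (v, true) w), act_not_reducible (act_not_reducible hw)⟩⟧ : Om Γ) =
          ⟦⟨act Γ (v, true) (act Γ (u, true) w), act_not_reducible (act_not_reducible hw)⟩⟧
        exact Quotient.sound (act_comm huv w))

lemma rho_toG (x : L V) (w : List (L V)) (hw : ¬ Reducible Γ w) :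
    rho Γ (toG Γ x) (⟦⟨w, hw⟩⟧ : Om Γ) = ⟦⟨act Γ x w, act_not_reducible hw⟩⟧ := by
  obtain ⟨v, b⟩ := x
  cases b
  · show rho Γ ((PresentedGroup.of v)⁻¹) _ = _
    rw [map_inv]
    show (rho Γ (PresentedGroup.of v))⁻¹ _ = _
    rw [rho, PresentedGroup.toGroup.of]
    rfl
  · show rho Γ (PresentedGroup.of v) _ = _
    rw [rho, PresentedGroup.toGroup.of]
    rfl

lemma rho_pw {w : List (L V)} (hw : ¬ Reducible Γ w) :
    rho Γ (pw Γ w) (⟦⟨[], not_reducible_nil⟩⟧ : Om Γ) = ⟦⟨w, hw⟩⟧ := by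
  induction w with
  | nil => rw [pw_nil, map_one]; rfl
  | cons x w ih =>
      have hw' : ¬ Reducible Γ w := fun h => hw (Reducible.cons h)
      rw [pw_cons, map_mul]
      show rho Γ (toG Γ x) (rho Γ (pw Γ w) ⟦⟨[], not_reducible_nil⟩⟧) = _
      rw [ih hw', rho_toG x w hw']
      have hnc : ¬ ∃ w', Cancels Γ x w w' := by
        rintro ⟨w', hw''⟩
        exact hw (Reducible.head hw'')
      exact congrArg _ (Subtype.ext (act_eq_cons hnc))

/-- Any two reduced words representing the same element have the same length. -/
lemma reduced_length_eq {w w' : List (L V)} (hw : ¬ Reducible Γ w) (hw' : ¬ Reducible Γ w')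
    (h : pw Γ w = pw Γ w') : w.length = w'.length := by
  have h1 := rho_pw hw
  rw [h, rho_pw hw'] at h1
  have h2 : Shuf Γ w' w := Quotient.exact h1
  exact h2.length.symm

/-! ### Connection with word length -/

lemma pw_inv (w : List (L V)) : pw Γ ((w.map linv).reverse) = (pw Γ w)⁻¹ := by
  induction w with
  | nil => simp
  | cons x w ih =>
      have : pw Γ ((w.map linv).reverse ++ [linv x]) = pw Γ ((w.map linv).reverse) * toG Γ (linv x) := by
        rw [pw_append]; simp
      simp only [List.map_cons, List.reverse_cons, this, ih, pw_cons, toG_linv, mul_inv_rev]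

lemma exists_pw (g : RAAG Γ) : ∃ w : List (L V), pw Γ w = g := by
  induction g using PresentedGroup.induction_on with
  | H z =>
      induction z using FreeGroup.induction_on with
      | C1 => exact ⟨[], by simp⟩
      | of v => exact ⟨[(v, true)], by simp [pw, toG]; rfl⟩
      | inv_of v hv =>
          obtain ⟨w, hw⟩ := hv
          exact ⟨(w.map linv).reverse, by rw [pw_inv, hw, map_inv]⟩
      | mul z₁ z₂ h1 h2 =>
          obtain ⟨w₁, hw₁⟩ := h1
          obtain ⟨w₂, hw₂⟩ := h2
          exact ⟨w₁ ++ w₂, by rw [pw_append, hw₁, hw₂, map_mul]⟩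

section WordLength

variable [Fintype V]

local notation "SS" => ((raagS Γ : Finset (RAAG Γ)) : Set (RAAG Γ))

lemma toG_mem_S (x : L V) : toG Γ x ∈ SS := by
  classical
  obtain ⟨v, b⟩ := x
  have h1 : (PresentedGroup.of v : RAAG Γ) ∈ raagS Γ := by
    simp [raagS]
  have h2 : ((PresentedGroup.of v : RAAG Γ))⁻¹ ∈ raagS Γ := by
    simp [raagS]
  cases b
  · exact Finset.mem_coe.mpr (by simpa [toG] using h2)
  · exact Finset.mem_coe.mpr (by simpa [toG] using h1)

lemma mem_S_iff {g : RAAG Γ} (h : g ∈ SS) : ∃ x : L V, toG Γ x = g := by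
  classical
  simp only [Finset.coe_union, Set.mem_union, Finset.coe_image, Set.mem_image,
    Finset.mem_coe, Finset.mem_univ, true_and, Finset.coe_univ, Set.image_univ,
    Set.mem_range, raagS] at h
  rcases h with ⟨v, rfl⟩ | ⟨v, rfl⟩
  · exact ⟨(v, true), rfl⟩
  · exact ⟨(v, false), rfl⟩

lemma wl_le (w : List (L V)) : wl SS (pw Γ w) ≤ w.length := by
  apply Nat.sInf_le
  refine ⟨w.map (toG Γ), ?_, by simp, rfl⟩
  intro g hg
  obtain ⟨y, _, rfl⟩ := List.mem_map.mp hg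
  exact toG_mem_S y

lemma exists_word_map {l : List (RAAG Γ)} (h : ∀ g ∈ l, g ∈ SS) :
    ∃ w : List (L V), List.map (toG Γ) w = l := by
  induction l with
  | nil => exact ⟨[], rfl⟩
  | cons g l ih =>
      obtain ⟨w, hw⟩ := ih (fun g' hg' => h g' (List.mem_cons_of_mem _ hg'))
      obtain ⟨x, hx⟩ := mem_S_iff (h g List.mem_cons_self)
      exact ⟨x :: w, by simp [hw, hx]⟩

lemma exists_reduced_geodesic (g : RAAG Γ) :
    ∃ w : List (L V), ¬ Reducible Γ w ∧ pw Γ w = g ∧ w.length = wl SS g := by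
  have hne : {n | ∃ l : List (RAAG Γ), (∀ x ∈ l, x ∈ SS) ∧ l.length = n ∧ l.prod = g}.Nonempty := by
    obtain ⟨w, hw⟩ := exists_pw g
    refine ⟨w.length, w.map (toG Γ), ?_, by simp, hw⟩
    intro a ha
    obtain ⟨y, _, rfl⟩ := List.mem_map.mp ha
    exact toG_mem_S y
  obtain ⟨l, hl, hlen, hprod⟩ := Nat.sInf_mem hne
  obtain ⟨w, rfl⟩ := exists_word_map hl
  have hpw : pw Γ w = g := hprod
  have hwlen : w.length = wl SS g := by simpa [wl] using hlen
  refine ⟨w, ?_, hpw, hwlen⟩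
  intro hred
  obtain ⟨w', hpw', hlen'⟩ := reducible_shorter hred
  have := wl_le (Γ := Γ) w'
  rw [hpw', hpw] at this
  omega

lemma reduced_geodesic {w : List (L V)} (hw : ¬ Reducible Γ w) :
    wl SS (pw Γ w) = w.length := by
  obtain ⟨w₀, h0, hpw0, hlen0⟩ := exists_reduced_geodesic (Γ := Γ) (pw Γ w)
  rw [← hlen0]
  exact (reduced_length_eq hw h0 hpw0.symm).symm

end WordLength

/-! ### Parity -/

variable (Γ) in
noncomputable def sgn : RAAG Γ →* Multiplicative (ZMod 2) :=
  PresentedGroup.toGroup (f := fun _ => Multiplicative.ofAdd 1) (by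
    rintro r ⟨u, v, huv, rfl⟩
    rw [map_commutatorElement, commutatorElement_eq_one_iff_commute]
    exact mul_comm _ _)

lemma sgn_toG (x : L V) : sgn Γ (toG Γ x) = Multiplicative.ofAdd 1 := by
  obtain ⟨v, b⟩ := x
  cases b
  · show sgn Γ ((PresentedGroup.of v)⁻¹) = _
    rw [map_inv, sgn, PresentedGroup.toGroup.of]
    decide
  · show sgn Γ (PresentedGroup.of v) = _
    rw [sgn, PresentedGroup.toGroup.of]

lemma sgn_pw (w : List (L V)) :
    sgn Γ (pw Γ w) = Multiplicative.ofAdd ((w.length : ZMod 2)) := by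
  induction w with
  | nil => simp
  | cons x w ih =>
      rw [pw_cons, map_mul, sgn_toG, ih]
      rw [← ofAdd_add]
      congr 1
      simp only [List.length_cons, Nat.cast_add, Nat.cast_one]
      ring

/-! ### Append inversion lemmas -/

lemma cancels_append_singleton {x s : L V} {w t : List (L V)}
    (h : Cancels Γ x (w ++ [s]) t) :
    (∃ t', Cancels Γ x w t') ∨ (s = linv x ∧ ∀ y ∈ w, Γ.Adj y.1 x.1) := by
  induction w generalizing t with
  | nil =>
      rcases cancels_cons_inv h with ⟨rfl, rfl⟩ | ⟨_, t₀, hc, rfl⟩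
      · exact Or.inr ⟨rfl, by simp⟩
      · exact absurd hc cancels_nil
  | cons z w ih =>
      rcases cancels_cons_inv h with ⟨rfl, rfl⟩ | ⟨hadj, t₀, hc, rfl⟩
      · exact Or.inl ⟨w, Cancels.head w⟩
      · rcases ih hc with ⟨t', ht'⟩ | ⟨rfl, hall⟩
        · exact Or.inl ⟨z :: t', Cancels.cons hadj ht'⟩
        · refine Or.inr ⟨rfl, ?_⟩
          intro y hy
          rcases List.mem_cons.mp hy with rfl | hy
          · exact hadj
          · exact hall y hy

lemma reducible_append_singleton {s : L V} {w : List (L V)}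
    (h : Reducible Γ (w ++ [s])) :
    Reducible Γ w ∨ ∃ a w₁, w = a ++ linv s :: w₁ ∧ ∀ y ∈ w₁, Γ.Adj y.1 s.1 := by
  induction w with
  | nil =>
      exfalso
      cases h with
      | head h2 => exact cancels_nil h2
      | cons h2 => exact not_reducible_nil h2
  | cons z w ih =>
      rw [List.cons_append] at h
      cases h with
      | head h2 =>
          rcases cancels_append_singleton h2 with ⟨t', ht'⟩ | ⟨rfl, hall⟩
          · exact Or.inl (Reducible.head ht')
          · refine Or.inr ⟨[], w, by simp, ?_⟩
            intro y hy; simpa using hall y hy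
      | cons h2 =>
          rcases ih h2 with h3 | ⟨a, w₁, rfl, hall⟩
          · exact Or.inl (Reducible.cons h3)
          · exact Or.inr ⟨z :: a, w₁, rfl, hall⟩

/-! ### Main lemma -/

section Main

variable [Fintype V]

local notation "SS" => ((raagS Γ : Finset (RAAG Γ)) : Set (RAAG Γ))

lemma conj_parity (c g : RAAG Γ) :
    wl SS (c⁻¹ * g * c) % 2 = wl SS g % 2 := by
  have hs : sgn Γ (c⁻¹ * g * c) = sgn Γ g := by
    rw [map_mul, map_mul, map_inv, mul_comm, mul_inv_cancel_left]
  obtain ⟨w₁, h₁, hpw₁, hlen₁⟩ := exists_reduced_geodesic (Γ := Γ) (c⁻¹ * g * c)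
  obtain ⟨w₂, h₂, hpw₂, hlen₂⟩ := exists_reduced_geodesic (Γ := Γ) g
  rw [← hpw₁, ← hpw₂, sgn_pw, sgn_pw] at hs
  have : ((w₁.length : ZMod 2)) = (w₂.length : ZMod 2) := by
    exact_mod_cast Multiplicative.ofAdd.injective hs
  rw [← hlen₁, ← hlen₂]
  exact (ZMod.natCast_eq_natCast_iff' _ _ _).mp this

lemma main_lemma (x : L V) (g : RAAG Γ)
    (h : wl SS ((toG Γ x)⁻¹ * g * toG Γ x) + 2 = wl SS g) :
    wl SS (toG Γ x * g * (toG Γ x)⁻¹) = wl SS g + 2 := by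
  obtain ⟨u, hu, hupw, hulen⟩ := exists_reduced_geodesic (Γ := Γ) ((toG Γ x)⁻¹ * g * toG Γ x)
  set W : List (L V) := x :: (u ++ [linv x]) with hW
  have hWpw : pw Γ W = g := by
    rw [hW, pw_cons, pw_append, hupw]
    simp only [pw_cons, pw_nil, toG_linv, mul_one]
    group
  have hWlen : W.length = wl SS g := by
    rw [hW]; simp [hulen, ← h]
  have hWred : ¬ Reducible Γ W := by
    intro hred
    obtain ⟨w', hpw', hlen'⟩ := reducible_shorter hred
    have hle := wl_le (Γ := Γ) w'
    rw [hpw', hWpw] at hle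
    omega
  -- Step 1 : x :: W is reduced
  have hW1red : ¬ Reducible Γ (x :: W) := by
    intro hred
    cases hred with
    | head h2 =>
        rcases cancels_cons_inv h2 with ⟨heq, _⟩ | ⟨hadj, _, _, _⟩
        · exact linv_ne x heq.symm
        · exact Γ.irrefl hadj
    | cons h2 => exact hWred h2
  -- Step 2 : (x :: W) ++ [linv x] is reduced
  have hW2red : ¬ Reducible Γ ((x :: W) ++ [linv x]) := by
    intro hred
    rcases reducible_append_singleton hred with h2 | ⟨a, w₁, heq, hall⟩
    · exact hW1red h2
    rw [linv_linv] at heq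
    have heq2 : a ++ x :: w₁ = (x :: x :: u) ++ [linv x] := by
      rw [← heq, hW]; simp
    rcases List.eq_nil_or_concat' w₁ with rfl | ⟨w₁', z, rfl⟩
    · have : a ++ [x] = (x :: x :: u) ++ [linv x] := by simpa using heq2
      have := (List.append_inj' this (by simp)).2
      simp only [List.cons.injEq, and_true] at this
      exact linv_ne x this.symm
    · have : (a ++ x :: w₁') ++ [z] = (x :: x :: u) ++ [linv x] := by
        rw [← heq2]; simp
      have hz := (List.append_inj' this (by simp)).2
      simp only [List.cons.injEq, and_true] at hz
      have hzmem : z ∈ w₁' ++ [z] := by simp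
      have := hall z hzmem
      rw [hz] at this
      exact Γ.irrefl (v := x.1) (by simpa using this)
  have hpw2 : pw Γ ((x :: W) ++ [linv x]) = toG Γ x * g * (toG Γ x)⁻¹ := by
    rw [pw_append, pw_cons, hWpw]
    simp
  have hgeo := reduced_geodesic (Γ := Γ) hW2red
  rw [hpw2] at hgeo
  have hlen : ((x :: W) ++ [linv x]).length = W.length + 2 := by simp
  rw [hgeo, hlen, hWlen]

end Main

section Final

variable [Fintype V]

local notation "SS" => ((raagS Γ : Finset (RAAG Γ)) : Set (RAAG Γ))

lemma wl_conj_ge (x : L V) (g : RAAG Γ) :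
    wl SS g ≤ wl SS ((toG Γ x)⁻¹ * g * toG Γ x) + 2 := by
  obtain ⟨u, hu, hupw, hulen⟩ := exists_reduced_geodesic (Γ := Γ) ((toG Γ x)⁻¹ * g * toG Γ x)
  have hle := wl_le (Γ := Γ) (x :: (u ++ [linv x]))
  have hpw : pw Γ (x :: (u ++ [linv x])) = g := by
    rw [pw_cons, pw_append, hupw]
    simp only [pw_cons, pw_nil, toG_linv, mul_one]
    group
  rw [hpw] at hle
  simpa [hulen] using hle

theorem final_statement (g t : RAAG Γ) (ht : t ∈ raagS Γ) :
    2 * wl SS g ≤ wl SS (t⁻¹ * g * t) + wl SS (t * g * t⁻¹) := by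
  obtain ⟨x, hx⟩ := mem_S_iff (Finset.mem_coe.mpr ht)
  subst hx
  have hpar1 : wl SS ((toG Γ x)⁻¹ * g * toG Γ x) % 2 = wl SS g % 2 := conj_parity (toG Γ x) g
  have hpar2 : wl SS (toG Γ x * g * (toG Γ x)⁻¹) % 2 = wl SS g % 2 := by
    have := conj_parity (Γ := Γ) (toG Γ x)⁻¹ g
    simpa using this
  have htri1 : wl SS g ≤ wl SS ((toG Γ x)⁻¹ * g * toG Γ x) + 2 := wl_conj_ge x g
  have htri2 : wl SS g ≤ wl SS (toG Γ x * g * (toG Γ x)⁻¹) + 2 := by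
    have := wl_conj_ge (Γ := Γ) (linv x) g
    simpa using this
  by_cases h1 : wl SS ((toG Γ x)⁻¹ * g * toG Γ x) + 2 = wl SS g
  · have := main_lemma x g h1
    omega
  by_cases h2 : wl SS (toG Γ x * g * (toG Γ x)⁻¹) + 2 = wl SS g
  · have h2' : wl SS ((toG Γ (linv x))⁻¹ * g * toG Γ (linv x)) + 2 = wl SS g := by
      simpa using h2
    have := main_lemma (linv x) g h2'
    simp only [toG_linv, inv_inv] at this
    omega
  · omega

end Final

end RaagProof

theorem stmt9 {V : Type*} [Fintype V] (Γ : SimpleGraph V) (g : RAAG Γ)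
    (t : RAAG Γ) (ht : t ∈ raagS Γ) :
    2 * wl ((raagS Γ : Finset (RAAG Γ)) : Set (RAAG Γ)) g ≤
      wl ((raagS Γ : Finset (RAAG Γ)) : Set (RAAG Γ)) (t⁻¹ * g * t) +
        wl ((raagS Γ : Finset (RAAG Γ)) : Set (RAAG Γ)) (t * g * t⁻¹) := by
  exact RaagProof.final_statement (Γ := Γ) g t ht
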